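/- For every n ≥ 1, Σ_{π ∈ Sₙ} pexc(π) = n! · (n + Hₙ − 4 + 2/n), where Hₙ = Σ_{k=1}^{n} 1/k; equivalently, the mean prefix exchange distance of a uniform random permutation of Sₙ is n + Hₙ − 4 + 2/n. -/

import Mathlib

open Equiv Finset Filter
open scoped Classical

noncomputable section

/-- Number of fixed points of a permutation. -/
def c1 {n : ℕ} (π : Equiv.Perm (Fin n)) : ℕ :=
  (Finset.univ.filter fun i => π i = i).card

/-- Number of cycles of length at least 2 of a permutation. -/
def c2 {n : ℕ} (π : Equiv.Perm (Fin n)) : ℕ := π.cycleType.card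

/-- The prefix exchange distance, given by the Akers–Krishnamurthy formula. -/
def pexc {n : ℕ} (π : Equiv.Perm (Fin n)) : ℕ :=
  n + c2 π - c1 π - (if ∀ i : Fin n, (i : ℕ) = 0 → π i = i then 0 else 2)

/-- Whitney numbers of the second kind for the star poset. -/
def W (n k : ℕ) : ℕ :=
  (Finset.univ.filter fun π : Equiv.Perm (Fin n) => pexc π = k).card

/-- The `n`-th harmonic number. -/
def H (n : ℕ) : ℝ := ∑ k ∈ Finset.Icc 1 n, (1 : ℝ) / k

lemma fix_count (n : ℕ) (i : Fin n) :
    (univ.filter fun π : Equiv.Perm (Fin n) => π i = i).card = (n-1).factorial := by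
  rw [← Fintype.card_subtype]
  have e : {π : Equiv.Perm (Fin n) // π i = i} ≃ Equiv.Perm {a : Fin n // ¬ a = i} := by
    refine (Equiv.subtypeEquivRight (q := fun π : Equiv.Perm (Fin n) =>
        ∀ a : Fin n, ¬ ¬ a = i → π a = a) ?_).trans
      (Equiv.Perm.subtypeEquivSubtypePerm (fun a : Fin n => ¬ a = i)).symm
    intro π
    constructor
    · intro h a ha
      rw [not_not] at ha; subst ha; exact h
    · intro h; exact h i (by simp)
  rw [Fintype.card_congr e, Fintype.card_perm]
  congr 1
  rw [Fintype.card_subtype_compl, Fintype.card_subtype_eq, Fintype.card_fin]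

lemma sum_c1 (n : ℕ) : ∑ π : Equiv.Perm (Fin n), c1 π = n * (n-1).factorial := by
  have h : ∀ π : Equiv.Perm (Fin n), c1 π = ∑ i : Fin n, if π i = i then 1 else 0 := by
    intro π; rw [c1, Finset.card_filter]
  simp_rw [h]
  rw [Finset.sum_comm]
  have h2 : ∀ i : Fin n, (∑ π : Equiv.Perm (Fin n), if π i = i then 1 else 0)
      = (n-1).factorial := by
    intro i; rw [← fix_count n i, Finset.card_filter]
  simp_rw [h2]
  simp [mul_comm]

lemma c2_eq {n : ℕ} (π : Equiv.Perm (Fin n)) : c2 π = π.cycleFactorsFinset.card := by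
  rw [c2, Equiv.Perm.cycleType_def, Multiset.card_map]; rfl

lemma factor_count {n : ℕ} (c : Equiv.Perm (Fin n)) (hc : c.IsCycle) :
    (univ.filter fun π : Equiv.Perm (Fin n) => c ∈ π.cycleFactorsFinset).card
      = (n - c.support.card).factorial := by
  have h1 : (univ.filter fun π : Equiv.Perm (Fin n) => c ∈ π.cycleFactorsFinset)
      = (univ.filter fun π => ∀ a ∈ c.support, π a = c a) := by
    ext π
    simp only [mem_filter, mem_univ, true_and, Equiv.Perm.mem_cycleFactorsFinset_iff]
    exact ⟨fun h a ha => (h.2 a ha).symm, fun h => ⟨hc, fun a ha => (h a ha).symm⟩⟩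
  rw [h1]
  have h2 : (univ.filter fun π : Equiv.Perm (Fin n) => ∀ a ∈ c.support, π a = c a).card
      = (univ.filter fun σ : Equiv.Perm (Fin n) => ∀ a ∈ c.support, σ a = a).card := by
    apply Finset.card_bij (fun π _ => π * c⁻¹)
    · intro π hπ
      simp only [mem_filter, mem_univ, true_and] at hπ ⊢
      intro a ha
      have ha' : c⁻¹ a ∈ c.support := by
        rw [← Equiv.Perm.support_inv c]
        exact Equiv.Perm.apply_mem_support.mpr (by rwa [Equiv.Perm.support_inv])
      calc (π * c⁻¹) a = π (c⁻¹ a) := rfl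
        _ = c (c⁻¹ a) := hπ _ ha'
        _ = a := c.apply_symm_apply a
    · intro π hπ ρ hρ h; exact mul_right_cancel h
    · intro σ hσ
      refine ⟨σ * c, ?_, by group⟩
      simp only [mem_filter, mem_univ, true_and] at hσ ⊢
      intro a ha
      have hca : c a ∈ c.support := Equiv.Perm.apply_mem_support.mpr ha
      calc (σ * c) a = σ (c a) := rfl
        _ = c a := hσ _ hca
  rw [h2, ← Fintype.card_subtype]
  have e : {σ : Equiv.Perm (Fin n) // ∀ a ∈ c.support, σ a = a}
      ≃ Equiv.Perm {a : Fin n // ¬ a ∈ c.support} := by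
    refine (Equiv.subtypeEquivRight ?_).trans
      (Equiv.Perm.subtypeEquivSubtypePerm (fun a : Fin n => ¬ a ∈ c.support)).symm
    intro σ
    constructor
    · intro h a ha; rw [not_not] at ha; exact h a ha
    · intro h a ha; exact h a (not_not.mpr ha)
  rw [Fintype.card_congr e, Fintype.card_perm]
  congr 1
  rw [Fintype.card_subtype_compl, Fintype.card_fin, Fintype.card_coe]

lemma marked_count {n k : ℕ} (hk : 2 ≤ k) :
    Fintype.card {p : Equiv.Perm (Fin n) × Fin n //
        p.1.IsCycle ∧ p.1.support.card = k ∧ p.2 ∈ p.1.support}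
      = n.descFactorial k := by
  have hcard : ∀ (c : Equiv.Perm (Fin n)) (x : Fin n), c.IsCycle → x ∈ c.support →
      (c.toList x).length = c.support.card := by
    intro c x hc hx
    rw [Equiv.Perm.length_toList, hc.cycleOf_eq (Equiv.Perm.mem_support.mp hx)]
  have hsupp : ∀ l : List (Fin n), l.Nodup → 2 ≤ l.length →
      l.formPerm.support = l.toFinset := by
    intro l hl h2
    refine List.support_formPerm_of_nodup l hl (fun x hx => by subst hx; simp at h2)
  have e1 : {p : Equiv.Perm (Fin n) × Fin n //
        p.1.IsCycle ∧ p.1.support.card = k ∧ p.2 ∈ p.1.support}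
      ≃ {l : List (Fin n) // l.Nodup ∧ l.length = k} := by
    refine ⟨fun p => ⟨p.1.1.toList p.1.2, Equiv.Perm.nodup_toList _ _, by
        rcases p with ⟨⟨c, x⟩, hc, hck, hx⟩
        simpa [hcard c x hc hx] using hck⟩,
      fun l => ⟨(l.1.formPerm, l.1.get ⟨0, by have := l.2.2; omega⟩), ?_⟩, ?_, ?_⟩
    · obtain ⟨l, hl, hlen⟩ := l
      have h2 : 2 ≤ l.length := by omega
      have hs := hsupp l hl h2
      refine ⟨List.isCycle_formPerm hl h2, ?_, ?_⟩
      · rw [hs, List.toFinset_card_of_nodup hl, hlen]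
      · rw [hs]
        exact List.mem_toFinset.mpr (l.get_mem _)
    · rintro ⟨⟨c, x⟩, hc, hck, hx⟩
      apply Subtype.ext
      dsimp only
      refine Prod.ext ?_ ?_
      · dsimp only
        rw [Equiv.Perm.formPerm_toList, hc.cycleOf_eq (Equiv.Perm.mem_support.mp hx)]
      · dsimp only
        exact Equiv.Perm.toList_getElem_zero c x hx
    · rintro ⟨l, hl, hlen⟩
      apply Subtype.ext
      dsimp only
      exact Equiv.Perm.toList_formPerm_nontrivial l (by omega) hl
  have e2 : {l : List (Fin n) // l.Nodup ∧ l.length = k} ≃ (Fin k ↪ Fin n) := by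
    refine ⟨fun l => ⟨fun i => l.1.get (Fin.cast l.2.2.symm i), ?_⟩,
        fun e => ⟨List.ofFn e, List.nodup_ofFn.mpr e.injective, List.length_ofFn⟩, ?_, ?_⟩
    · intro i j h
      have := List.nodup_iff_injective_get.mp l.2.1 h
      exact Fin.cast_injective _ this
    · rintro ⟨l, hl, hlen⟩
      apply Subtype.ext
      dsimp only
      apply List.ext_get (by simp [hlen])
      intro i h1 h2
      simp [List.get_ofFn, Fin.cast]
      rfl
    · intro e
      ext i
      simp [List.get_ofFn, Fin.cast]
  rw [Fintype.card_congr (e1.trans e2), Fintype.card_embedding_eq, Fintype.card_fin,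
    Fintype.card_fin]

lemma cycles_size_count {n k : ℕ} (hk : 2 ≤ k) :
    (univ.filter fun c : Equiv.Perm (Fin n) => c.IsCycle ∧ c.support.card = k).card * k
      = n.descFactorial k := by
  rw [← marked_count (n := n) hk, Fintype.card_subtype]
  have h : ∀ c : Equiv.Perm (Fin n),
      (∑ x : Fin n, if c.IsCycle ∧ c.support.card = k ∧ x ∈ c.support then 1 else 0)
        = if c.IsCycle ∧ c.support.card = k then c.support.card else 0 := by
    intro c
    by_cases h : c.IsCycle ∧ c.support.card = k
    · rw [if_pos h]
      have h2 : (∑ x : Fin n, if c.IsCycle ∧ c.support.card = k ∧ x ∈ c.support then 1 else 0)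
          = ∑ x : Fin n, if x ∈ c.support then 1 else 0 :=
        Finset.sum_congr rfl fun x _ => by
          by_cases hxs : x ∈ c.support <;> simp [hxs, h.1, h.2]
      rw [h2, ← Finset.card_filter, Finset.filter_univ_mem]
    · rw [if_neg h, Finset.sum_eq_zero (fun x _ => if_neg (fun hc => h ⟨hc.1, hc.2.1⟩))]
  have hrhs : (univ.filter fun p : Equiv.Perm (Fin n) × Fin n =>
        p.1.IsCycle ∧ p.1.support.card = k ∧ p.2 ∈ p.1.support).card
      = ∑ c : Equiv.Perm (Fin n),
          if c.IsCycle ∧ c.support.card = k then c.support.card else 0 := by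
    rw [Finset.card_filter, Fintype.sum_prod_type]
    exact Finset.sum_congr rfl fun c _ => h c
  rw [hrhs, ← Finset.sum_filter]
  rw [Finset.sum_congr rfl (fun c hc => ((Finset.mem_filter.mp hc).2.2 : c.support.card = k))]
  rw [Finset.sum_const, smul_eq_mul]

lemma sum_c2 (n : ℕ) (hn : 1 ≤ n) :
    ∑ π : Equiv.Perm (Fin n), (c2 π : ℝ) = (n.factorial : ℝ) * (H n - 1) := by
  have step1 : ∑ π : Equiv.Perm (Fin n), (c2 π : ℝ)
      = ∑ c ∈ univ.filter (fun c : Equiv.Perm (Fin n) => c.IsCycle),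
          ((n - c.support.card).factorial : ℝ) := by
    have h1 : ∀ π : Equiv.Perm (Fin n), (c2 π : ℝ)
        = ∑ c ∈ univ.filter (fun c : Equiv.Perm (Fin n) => c.IsCycle),
            if c ∈ π.cycleFactorsFinset then (1:ℝ) else 0 := by
      intro π
      rw [Finset.sum_boole]
      have : (univ.filter (fun c : Equiv.Perm (Fin n) => c.IsCycle)).filter
          (fun c => c ∈ π.cycleFactorsFinset) = π.cycleFactorsFinset := by
        ext c
        simp only [Finset.mem_filter, Finset.mem_univ, true_and, and_iff_right_iff_imp]
        exact fun hm => (Equiv.Perm.mem_cycleFactorsFinset_iff.mp hm).1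
      rw [this, c2_eq]
    simp_rw [h1]
    rw [Finset.sum_comm]
    refine Finset.sum_congr rfl fun c hc => ?_
    have hcyc : c.IsCycle := (Finset.mem_filter.mp hc).2
    rw [Finset.sum_boole, ← factor_count c hcyc]
  rw [step1]
  -- fiberwise by support size
  rw [← Finset.sum_fiberwise_of_maps_to (g := fun c : Equiv.Perm (Fin n) => c.support.card)
    (t := Finset.Icc 2 n) (fun c hc => ?_)]
  · have hterm : ∀ k ∈ Finset.Icc 2 n,
        (∑ c ∈ (univ.filter (fun c : Equiv.Perm (Fin n) => c.IsCycle)).filter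
            (fun c => c.support.card = k), ((n - c.support.card).factorial : ℝ))
          = (n.factorial : ℝ) / k := by
      intro k hk
      obtain ⟨hk2, hkn⟩ := Finset.mem_Icc.mp hk
      have hmerge : (univ.filter (fun c : Equiv.Perm (Fin n) => c.IsCycle)).filter
          (fun c => c.support.card = k)
          = univ.filter (fun c : Equiv.Perm (Fin n) => c.IsCycle ∧ c.support.card = k) := by
        rw [Finset.filter_filter]
      rw [hmerge]
      rw [Finset.sum_congr rfl (fun c hc => by
        rw [(Finset.mem_filter.mp hc).2.2])]
      rw [Finset.sum_const, nsmul_eq_mul]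
      have hcount := cycles_size_count (n := n) hk2
      have hkpos : (0:ℝ) < k := by positivity
      have : ((univ.filter fun c : Equiv.Perm (Fin n) =>
          c.IsCycle ∧ c.support.card = k).card : ℝ) = (n.descFactorial k : ℝ) / k := by
        field_simp
        exact_mod_cast congrArg Nat.cast hcount
      rw [this]
      rw [div_mul_eq_mul_div]
      congr 1
      rw [← Nat.cast_mul]
      rw [mul_comm, ← Nat.factorial_mul_descFactorial hkn]
    rw [Finset.sum_congr rfl hterm]
    -- ∑ k ∈ Icc 2 n, n!/k = n! (H n - 1)
    have hins : Finset.Icc 1 n = insert 1 (Finset.Icc 2 n) := by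
      ext x
      simp only [Finset.mem_Icc, Finset.mem_insert]
      omega
    have h1 : H n = 1 + ∑ k ∈ Finset.Icc 2 n, (1:ℝ)/k := by
      rw [H, hins, Finset.sum_insert (by simp)]
      norm_num
    rw [h1]
    have hS : (1:ℝ) + (∑ k ∈ Finset.Icc 2 n, (1:ℝ)/k) - 1 = ∑ k ∈ Finset.Icc 2 n, (1:ℝ)/k := by
      ring
    rw [hS, Finset.mul_sum]
    exact Finset.sum_congr rfl fun k hk => by rw [mul_one_div]
  · simp only [Finset.mem_Icc]
    have hcyc : c.IsCycle := (Finset.mem_filter.mp hc).2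
    exact ⟨hcyc.two_le_card_support, le_trans (Finset.card_le_univ _) (by simp)⟩

theorem stmt11 (n : ℕ) (hn : 1 ≤ n) :
    ∑ π : Equiv.Perm (Fin n), (pexc π : ℝ) =
      (Nat.factorial n : ℝ) * ((n : ℝ) + H n - 4 + 2 / n) := by
  have npos : 0 < n := hn
  set i0 : Fin n := ⟨0, npos⟩ with hi0
  have hcond : ∀ π : Equiv.Perm (Fin n),
      (∀ i : Fin n, (i : ℕ) = 0 → π i = i) ↔ π i0 = i0 := by
    intro π
    constructor
    · intro h; exact h i0 rfl
    · intro h i hi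
      have : i = i0 := Fin.ext hi
      rw [this]; exact h
  have key : ∀ π : Equiv.Perm (Fin n),
      (pexc π : ℝ) = (n : ℝ) + (c2 π : ℝ) - (c1 π : ℝ)
        - (if π i0 = i0 then (0:ℝ) else 2) := by
    intro π
    have hfilter : (univ.filter fun i => π i = i) = (π.support)ᶜ := by
      ext i; simp [Equiv.Perm.mem_support]
    have hc1 : c1 π = n - π.support.card := by
      rw [c1, hfilter, Finset.card_compl, Fintype.card_fin]
    have hsle : π.support.card ≤ n := by
      simpa using Finset.card_le_univ π.support
    rw [pexc]
    by_cases h0 : π i0 = i0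
    · rw [if_pos ((hcond π).mpr h0), if_pos h0, Nat.sub_zero]
      have hle : c1 π ≤ n + c2 π := le_trans (by omega) (Nat.le_add_right n _)
      rw [Nat.cast_sub hle]
      push_cast; ring
    · rw [if_neg (fun hc => h0 ((hcond π).mp hc)), if_neg h0]
      have hne : π ≠ 1 := fun h => h0 (by rw [h]; rfl)
      have hpos : 0 < π.support.card := by
        rcases Nat.eq_zero_or_pos π.support.card with h | h
        · exact absurd (Equiv.Perm.card_support_eq_zero.mp h) hne
        · exact h
      have hone : π.support.card ≠ 1 := Equiv.Perm.card_support_ne_one π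
      have h2s : 2 ≤ π.support.card := by omega
      have hle : c1 π + 2 ≤ n + c2 π := le_trans (by omega) (Nat.le_add_right n _)
      rw [Nat.sub_sub, Nat.cast_sub hle]
      push_cast; ring
  simp_rw [key]
  rw [Finset.sum_sub_distrib, Finset.sum_sub_distrib, Finset.sum_add_distrib]
  have hcardP : (univ : Finset (Equiv.Perm (Fin n))).card = n.factorial := by
    rw [Finset.card_univ, Fintype.card_perm, Fintype.card_fin]
  have e1 : ∑ _π : Equiv.Perm (Fin n), (n : ℝ) = (n.factorial : ℝ) * n := by
    rw [Finset.sum_const, hcardP, nsmul_eq_mul]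
  have e2 : ∑ π : Equiv.Perm (Fin n), (c1 π : ℝ) = (n.factorial : ℝ) := by
    rw [← Nat.cast_sum, sum_c1]
    exact_mod_cast congrArg Nat.cast (Nat.mul_factorial_pred npos.ne')
  have e3 : ∑ π : Equiv.Perm (Fin n), (if π i0 = i0 then (0:ℝ) else 2)
      = 2 * ((n.factorial : ℝ) - ((n-1).factorial : ℝ)) := by
    rw [Finset.sum_ite, Finset.sum_const, Finset.sum_const, smul_zero, zero_add, nsmul_eq_mul]
    have h4 : (univ.filter fun π : Equiv.Perm (Fin n) => ¬ π i0 = i0).card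
        = n.factorial - (n-1).factorial := by
      rw [Finset.filter_not, Finset.card_sdiff_of_subset (Finset.filter_subset _ _), hcardP, fix_count]
    rw [h4, Nat.cast_sub (Nat.factorial_le (by omega))]
    ring
  rw [e1, e2, e3, sum_c2 n hn]
  have hfact : ((n-1).factorial : ℝ) = (n.factorial : ℝ) / n := by
    rw [eq_div_iff (by positivity : (n:ℝ) ≠ 0)]
    exact_mod_cast congrArg Nat.cast ((mul_comm _ _).trans (Nat.mul_factorial_pred npos.ne'))
  rw [hfact]
  have hne : (n:ℝ) ≠ 0 := by positivity
  field_simp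
  ring
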